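/- In the causal model with binary endogenous variables A, C, D, E, equations E = (C ∧ D) ∨ A and A = ¬D, and a context u in which D=0 and C=1 (so that A=1 and E=1), it holds that C=1 is not a NESS-cause of E=1 w.r.t. (M,u). -/

import Mathlib

/-!
Structural equation models (causal models) à la Pearl/Halpern, formalizing
Beckers' "The Counterfactual NESS Definition of Causation".

A causal model over a context type `Ctx` (settings of the exogenous variables),
endogenous variables `V` and values `Val` consists of finite nonempty ranges
`R X`, structural equations `F X`, and a strong-recursiveness (acyclicity)
witness: an order `ord` such that `F X` only depends on variables of lower order.
-/

structure CausalModel (Ctx V Val : Type) where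
  R : V → Finset Val
  R_nonempty : ∀ X, (R X).Nonempty
  F : V → Ctx → (V → Val) → Val
  ord : V → ℕ
  F_resp : ∀ X u s s', (∀ Y, ord Y < ord X → s Y = s' Y) → F X u s = F X u s'

namespace CausalModel

variable {Ctx V Val : Type}

/-- The unique solution of the equations in context `u` (it exists and is
unique by strong recursiveness). `(M,u) ⊨ X = x` iff `M.sol u X = x`. -/
noncomputable def sol (M : CausalModel Ctx V Val) (u : Ctx) : V → Val :=
  fun X =>
    M.F X u (fun Y => if h : M.ord Y < M.ord X then M.sol u Y else (M.R_nonempty Y).choose)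
termination_by X => M.ord X
decreasing_by exact h

/-- `M.sol u` indeed solves all the equations. -/
theorem sol_eq (M : CausalModel Ctx V Val) (u : Ctx) (X : V) :
    M.sol u X = M.F X u (M.sol u) := by
  rw [sol]
  exact M.F_resp X u _ _ (fun Y hY => dif_pos hY)

variable [DecidableEq V]

/-- `X⃗ = x⃗` (given by the set `Xs` and the assignment `xs`) is sufficient for
`E = e` w.r.t. `(M, u)`: the equation for `E` outputs `e` on every setting of the
endogenous variables (in their ranges) that agrees with `xs` on `Xs`. -/
def Sufficient (M : CausalModel Ctx V Val) (u : Ctx) (Xs : Finset V) (xs : V → Val)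
    (E : V) (e : Val) : Prop :=
  ∀ s : V → Val, (∀ Y, s Y ∈ M.R Y) → (∀ X ∈ Xs, s X = xs X) → M.F E u s = e

/-- The intervened model `M_{X⃗ ← x⃗}`: the equations of variables in `Xs` are
replaced by the constants given by `xs`. -/
def intervene (M : CausalModel Ctx V Val) (Xs : Finset V) (xs : V → Val) :
    CausalModel Ctx V Val where
  R := M.R
  R_nonempty := M.R_nonempty
  F := fun X u s => if X ∈ Xs then xs X else M.F X u s
  ord := M.ord
  F_resp := by
    intro X u s s' h
    by_cases hX : X ∈ Xs
    · simp [hX]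
    · simpa [hX] using M.F_resp X u s s' h

/-- `W⃗ = w⃗` (given by `Ws, ws`) is a witness for `C = c` directly NESS-causing
`E = e` w.r.t. `(M, u)`: `C = c` and `W⃗ = w⃗` actually hold, `{C = c} ∪ {W⃗ = w⃗}`
is sufficient for `E = e`, and `W⃗ = w⃗` alone is not. -/
def DirectNESSWith (M : CausalModel Ctx V Val) (u : Ctx) (C : V) (c : Val) (E : V) (e : Val)
    (Ws : Finset V) (ws : V → Val) : Prop :=
  M.sol u C = c ∧ (∀ W ∈ Ws, M.sol u W = ws W) ∧
  M.Sufficient u (insert C Ws) (Function.update ws C c) E e ∧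
  ¬ M.Sufficient u Ws ws E e

/-- `C = c` directly NESS-causes `E = e` w.r.t. `(M, u)`. -/
def DirectNESS (M : CausalModel Ctx V Val) (u : Ctx) (C : V) (c : Val) (E : V) (e : Val) :
    Prop :=
  ∃ (Ws : Finset V) (ws : V → Val), M.DirectNESSWith u C c E e Ws ws

/-- `C = c` NESS-causes `E = e` along the path `p = (C₁, …, Cₙ)` w.r.t. `(M, u)`:
there are values `c₁, …, cₙ` such that `C = c` directly NESS-causes `C₁ = c₁`, …,
and `Cₙ = cₙ` directly NESS-causes `E = e`. (A direct NESS-cause is a NESS-cause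
along the empty path.) -/
def NESSAlong (M : CausalModel Ctx V Val) (u : Ctx) (C : V) (c : Val) (p : List V)
    (E : V) (e : Val) : Prop :=
  ∃ cs : List Val, cs.length = p.length ∧
    List.Chain (fun a b => M.DirectNESS u a.1 a.2 b.1 b.2) (C, c) (p.zip cs ++ [(E, e)])

/-- `C = c` NESS-causes `E = e` w.r.t. `(M, u)`: there is a chain of direct
NESS-causes from `C = c` to `E = e`. -/
def NESS (M : CausalModel Ctx V Val) (u : Ctx) (C : V) (c : Val) (E : V) (e : Val) : Prop :=
  ∃ p : List V, M.NESSAlong u C c p E e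

/-- The BV definition: `C = c` NESS-causes `E = e` w.r.t. `(M, u)` and there is a
`c' ∈ R(C)` such that `C = c'` does not NESS-cause `E = e` w.r.t. `(M_{C ← c'}, u)`. -/
def BVCause (M : CausalModel Ctx V Val) (u : Ctx) (C : V) (c : Val) (E : V) (e : Val) :
    Prop :=
  M.NESS u C c E e ∧
    ∃ c' ∈ M.R C, ¬ (M.intervene {C} (fun _ => c')).NESS u C c' E e

/-- The CNESS definition: `C = c` NESS-causes `E = e` along some path `p` w.r.t.
`(M, u)` and there is a `c' ∈ R(C)` such that `C = c'` does not NESS-cause `E = e`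
along any subpath of `p` (a path all of whose variables are in `p`) w.r.t.
`(M_{C ← c'}, u)`. -/
def CNESSCause (M : CausalModel Ctx V Val) (u : Ctx) (C : V) (c : Val) (E : V) (e : Val) :
    Prop :=
  ∃ p : List V, M.NESSAlong u C c p E e ∧
    ∃ c' ∈ M.R C, ∀ p' : List V, (∀ X ∈ p', X ∈ p) →
      ¬ (M.intervene {C} (fun _ => c')).NESSAlong u C c' p' E e

/-- `E = e` is counterfactually dependent on `C = c` w.r.t. `(M, u)`:
`(M,u) ⊨ C = c ∧ E = e` and there is a `c' ∈ R(C)` with `(M,u) ⊨ [C ← c'] ¬(E = e)`. -/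
def CfDep (M : CausalModel Ctx V Val) (u : Ctx) (C : V) (c : Val) (E : V) (e : Val) : Prop :=
  M.sol u C = c ∧ M.sol u E = e ∧
    ∃ c' ∈ M.R C, (M.intervene {C} (fun _ => c')).sol u E ≠ e

/-- `E = e` is counterfactually dependent on `C = c` given the intervention
`X⃗ ← x⃗`: in `M_{X⃗ ← x⃗}` with context `u`, `C = c` and `E = e` hold, and there is
a `c' ∈ R(C)` such that additionally intervening with `C ← c'` makes `E = e` false. -/
def CfDepGiven (M : CausalModel Ctx V Val) (u : Ctx) (Xs : Finset V) (xs : V → Val)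
    (C : V) (c : Val) (E : V) (e : Val) : Prop :=
  (M.intervene Xs xs).sol u C = c ∧ (M.intervene Xs xs).sol u E = e ∧
    ∃ c' ∈ M.R C, ((M.intervene Xs xs).intervene {C} (fun _ => c')).sol u E ≠ e

/-- `Y` is a parent of `X`: the equation `F X` varies with the value of `Y`
for some context and some setting (within the ranges) of the other variables. -/
def Parent (M : CausalModel Ctx V Val) (Y X : V) : Prop :=
  ∃ (u : Ctx) (s : V → Val) (y y' : Val),
    (∀ Z, s Z ∈ M.R Z) ∧ y ∈ M.R Y ∧ y' ∈ M.R Y ∧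
    M.F X u (Function.update s Y y) ≠ M.F X u (Function.update s Y y')

end CausalModel
/-- Variables for the model with equations `E = (C ∧ D) ∨ A`, `A = ¬D`. -/
inductive V4 | A | C | D | E
deriving DecidableEq

/-- The model with equations `E = (C ∧ D) ∨ A` and `A = ¬D`,
in a context where `D = 0` and `C = 1`. -/
def M4 : CausalModel Unit V4 Bool where
  R := fun _ => Finset.univ
  R_nonempty := fun _ => Finset.univ_nonempty
  F := fun X _ s =>
    match X with
    | .A => !(s .D)
    | .C => true
    | .D => false
    | .E => (s .C && s .D) || s .A
  ord := fun X => match X with | .D => 0 | .C => 0 | .A => 1 | .E => 2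
  F_resp := by
    intro X u s s' h
    cases X
    · show (!(s V4.D)) = (!(s' V4.D))
      rw [h V4.D (by decide)]
    · rfl
    · rfl
    · show ((s V4.C && s V4.D) || s V4.A) = ((s' V4.C && s' V4.D) || s' V4.A)
      rw [h V4.C (by decide), h V4.D (by decide), h V4.A (by decide)]


lemma m4_sol_D : M4.sol () V4.D = false := by
  rw [CausalModel.sol_eq]; rfl

lemma m4_sol_C : M4.sol () V4.C = true := by
  rw [CausalModel.sol_eq]; rfl

lemma m4_sol_A : M4.sol () V4.A = true := by
  rw [CausalModel.sol_eq]
  show (!(M4.sol () V4.D)) = true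
  rw [m4_sol_D]; rfl

lemma m4_sol_E : M4.sol () V4.E = true := by
  rw [CausalModel.sol_eq]
  show ((M4.sol () V4.C && M4.sol () V4.D) || M4.sol () V4.A) = true
  rw [m4_sol_D, m4_sol_C, m4_sol_A]; rfl

lemma m4_no_direct (X : V4) (x : Bool) : ¬ M4.DirectNESS () V4.C true X x := by
  rintro ⟨Ws, ws, hC, hWs, hsuff, hnsuff⟩
  cases X with
  | E =>
    by_cases hA : V4.A ∈ Ws
    · -- ws A = true, so Ws alone is sufficient
      have hwsA : ws V4.A = true := by rw [← hWs _ hA, m4_sol_A]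
      have hx : x = true := by
        have h := hsuff (M4.sol ()) (fun _ => Finset.mem_univ _) ?_
        · rw [← h]
          show ((M4.sol () V4.C && M4.sol () V4.D) || M4.sol () V4.A) = true
          rw [m4_sol_A]; simp
        · intro Y hY
          by_cases hYC : Y = V4.C
          · subst hYC; simp [m4_sol_C]
          · rw [Function.update_of_ne hYC]
            rcases Finset.mem_insert.mp hY with h | h
            · exact absurd h hYC
            · exact hWs _ h
      apply hnsuff
      intro s _ hs
      have : s V4.A = true := by rw [hs _ hA, hwsA]
      show ((s V4.C && s V4.D) || s V4.A) = x
      rw [this, hx]; simp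
    · -- A not in Ws: sufficiency of insert C Ws fails
      set s1 : V4 → Bool :=
        fun Y => if Y ∈ insert V4.C Ws then Function.update ws V4.C true Y else false with hs1
      have hAni : V4.A ∉ insert V4.C Ws := by
        simp only [Finset.mem_insert]
        rintro (h | h)
        · exact V4.noConfusion h
        · exact hA h
      have h1 : M4.F V4.E () s1 = x :=
        hsuff s1 (fun _ => Finset.mem_univ _) (fun Y hY => if_pos hY)
      have h2 : M4.F V4.E () (Function.update s1 V4.A true) = x := by
        apply hsuff _ (fun _ => Finset.mem_univ _)
        intro Y hY
        rw [Function.update_of_ne (by rintro rfl; exact hAni hY)]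
        exact if_pos hY
      have hs1A : s1 V4.A = false := if_neg hAni
      have hs1D : s1 V4.D = false := by
        by_cases hD : V4.D ∈ Ws
        · have : s1 V4.D = Function.update ws V4.C true V4.D :=
            if_pos (Finset.mem_insert_of_mem hD)
          rw [this, Function.update_of_ne (by intro h; exact V4.noConfusion h)]
          rw [← hWs _ hD, m4_sol_D]
        · apply if_neg
          simp only [Finset.mem_insert]
          rintro (h | h)
          · exact V4.noConfusion h
          · exact hD h
      have e1 : ((s1 V4.C && s1 V4.D) || s1 V4.A) = x := h1
      have e2 : ((Function.update s1 V4.A true V4.C && Function.update s1 V4.A true V4.D)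
          || Function.update s1 V4.A true V4.A) = x := h2
      rw [hs1A, hs1D] at e1
      rw [Function.update_of_ne (by intro h; exact V4.noConfusion h),
          Function.update_of_ne (by intro h; exact V4.noConfusion h),
          Function.update_self, hs1D] at e2
      simp at e1 e2
      rw [e1] at e2
      exact Bool.false_ne_true e2
  | A =>
    apply hnsuff
    intro s _ hs
    have h := hsuff (Function.update s V4.C true) (fun _ => Finset.mem_univ _) ?_
    · rw [← h]
      show (!(s V4.D)) = (!(Function.update s V4.C true V4.D))
      rw [Function.update_of_ne (by intro h; exact V4.noConfusion h)]
    · intro Y hY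
      by_cases hYC : Y = V4.C
      · subst hYC; simp
      · rw [Function.update_of_ne hYC, Function.update_of_ne hYC]
        rcases Finset.mem_insert.mp hY with h | h
        · exact absurd h hYC
        · exact hs _ h
  | C =>
    apply hnsuff
    intro s _ hs
    exact hsuff (Function.update s V4.C true) (fun _ => Finset.mem_univ _) (by
      intro Y hY
      by_cases hYC : Y = V4.C
      · subst hYC; simp
      · rw [Function.update_of_ne hYC, Function.update_of_ne hYC]
        rcases Finset.mem_insert.mp hY with h | h
        · exact absurd h hYC
        · exact hs _ h)
  | D =>
    apply hnsuff
    intro s _ hs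
    exact hsuff (Function.update s V4.C true) (fun _ => Finset.mem_univ _) (by
      intro Y hY
      by_cases hYC : Y = V4.C
      · subst hYC; simp
      · rw [Function.update_of_ne hYC, Function.update_of_ne hYC]
        rcases Finset.mem_insert.mp hY with h | h
        · exact absurd h hYC
        · exact hs _ h)

/-- In the model with equations `E = (C ∧ D) ∨ A`, `A = ¬D` and a
context with `D = 0` and `C = 1` (so `A = 1` and `E = 1`), `C = 1` is not a
NESS-cause of `E = 1` w.r.t. `(M, u)`. -/
theorem c_not_ness_cause :
    M4.sol () V4.A = true ∧ M4.sol () V4.E = true ∧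
      ¬ M4.NESS () V4.C true V4.E true := by
  refine ⟨m4_sol_A, m4_sol_E, ?_⟩
  rintro ⟨p, cs, hlen, hch⟩
  obtain ⟨b, l, hbl⟩ : ∃ b l, p.zip cs ++ [(V4.E, true)] = b :: l := by
    cases h : p.zip cs with
    | nil => exact ⟨_, _, rfl⟩
    | cons a t => exact ⟨_, _, rfl⟩
  rw [hbl] at hch
  cases hch with
  | cons_cons h _ => exact m4_no_direct b.1 b.2 h
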